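/- Let f : X × Y → ℝ be differentiable, L-smooth, and μ-strongly convex-μ-strongly concave on convex compact sets X, Y with diameters at most D, and let z* = (x*, y*) be its saddle point. Consider the perturbed extra-gradient iteration with step size η = 1/(4L) where all gradient errors are bounded in norm by Δ at every query point, so that ‖F(z) − G̃(z)‖ ≤ √2·Δ for z ∈ {z_t, ẑ_t}, where F(z) = (∇_x f, −∇_y f) and G̃ is the perturbed operator. Then for each t: ‖z* − z_{t+1}‖² ≤ (1 − 1/(4κ))‖z* − z_t‖² + 2ΔD/L, where κ = L/μ. Consequently ‖z* − z_{T+1}‖² ≤ e^{−T/(4κ)}‖z* − z_1‖² + 8κΔD/L. -/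

import Mathlib

open scoped RealInnerProductSpace

lemma aux_eps {a b : ℝ} (hb : 0 ≤ b) (h : ∀ t : ℝ, 0 < t → t ≤ 1 → -(t * b) ≤ a) : 0 ≤ a := by
  by_contra hc
  push_neg at hc
  rcases eq_or_lt_of_le hb with hb0 | hb0
  · have := h 1 one_pos le_rfl; rw [← hb0] at this; linarith
  · have ht0 : 0 < min 1 (-a / (2 * b)) := by
      apply lt_min one_pos
      apply div_pos (by linarith) (by linarith)
    have := h _ ht0 (min_le_left _ _)
    have h2 : min 1 (-a / (2 * b)) * b ≤ (-a / (2 * b)) * b :=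
      mul_le_mul_of_nonneg_right (min_le_right _ _) hb
    have h3 : (-a / (2 * b)) * b = -a / 2 := by field_simp
    linarith

lemma projVI {E : Type*} [NormedAddCommGroup E] [InnerProductSpace ℝ E]
    {C : Set E} (hC : Convex ℝ C) {u v w : E} (hu : u ∈ C) (hw : w ∈ C)
    (hmin : ∀ z ∈ C, ‖v - u‖ ≤ ‖v - z‖) : ⟪v - u, w - u⟫ ≤ 0 := by
  have key : ∀ t : ℝ, 0 < t → t ≤ 1 → ⟪v - u, w - u⟫ ≤ t * (‖w - u‖ ^ 2 / 2) := by
    intro t ht ht1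
    have hz : u + t • (w - u) ∈ C := by
      have h0 := hC hu hw (by linarith : (0:ℝ) ≤ 1 - t) ht.le (by ring)
      have : (1 - t) • u + t • w = u + t • (w - u) := by module
      rwa [this] at h0
    have h2 := hmin _ hz
    have h3 : ‖v - (u + t • (w - u))‖ ^ 2
        = ‖v - u‖ ^ 2 - 2 * (t * ⟪v - u, w - u⟫) + t ^ 2 * ‖w - u‖ ^ 2 := by
      have he : v - (u + t • (w - u)) = (v - u) - t • (w - u) := by module
      rw [he, norm_sub_sq_real, real_inner_smul_right, norm_smul]
      rw [Real.norm_eq_abs, abs_of_pos ht]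
      ring
    have h4 : ‖v - u‖ ^ 2 ≤ ‖v - (u + t • (w - u))‖ ^ 2 :=
      pow_le_pow_left₀ (norm_nonneg _) h2 2
    nlinarith [sq_nonneg t]
  have h0 : 0 ≤ -⟪v - u, w - u⟫ := by
    apply aux_eps (b := ‖w - u‖ ^ 2 / 2) (by positivity)
    intro t ht ht1
    have := key t ht ht1
    linarith
  linarith

lemma scmin {E : Type*} [NormedAddCommGroup E] [InnerProductSpace ℝ E]
    {C : Set E} (hC : Convex ℝ C) {φ : E → ℝ} {g : E → E} {μ : ℝ} (hμ : 0 ≤ μ)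
    (h : ∀ x₁ ∈ C, ∀ x₂ ∈ C, φ x₂ ≥ φ x₁ + ⟪g x₁, x₂ - x₁⟫ + μ / 2 * ‖x₂ - x₁‖ ^ 2)
    {xs : E} (hxs : xs ∈ C) (hmin : ∀ x ∈ C, φ xs ≤ φ x)
    {xh : E} (hxh : xh ∈ C) : φ xs + μ / 2 * ‖xh - xs‖ ^ 2 ≤ φ xh := by
  have key : ∀ t : ℝ, 0 < t → t ≤ 1 →
      -(t * (μ / 2 * ‖xh - xs‖ ^ 2)) ≤ φ xh - φ xs - μ / 2 * ‖xh - xs‖ ^ 2 := by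
    intro t ht ht1
    have hxtC : xs + t • (xh - xs) ∈ C := by
      have h0 := hC hxs hxh (by linarith : (0:ℝ) ≤ 1 - t) ht.le (by ring)
      have he : (1 - t) • xs + t • xh = xs + t • (xh - xs) := by module
      rwa [he] at h0
    set xt := xs + t • (xh - xs) with hxt
    have A1 := h xt hxtC xs hxs
    have A2 := h xt hxtC xh hxh
    have A3 := hmin xt hxtC
    have e1 : xs - xt = (-t) • (xh - xs) := by rw [hxt]; module
    have e2 : xh - xt = (1 - t) • (xh - xs) := by rw [hxt]; module
    rw [e1] at A1
    rw [e2] at A2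
    rw [real_inner_smul_right] at A1 A2
    rw [norm_smul, Real.norm_eq_abs, abs_neg, abs_of_pos (by linarith : (0:ℝ) < t)] at A1
    rw [norm_smul, Real.norm_eq_abs, abs_of_nonneg (by linarith : (0:ℝ) ≤ 1 - t)] at A2
    have E1 := mul_le_mul_of_nonneg_left A1.le (by linarith : (0:ℝ) ≤ 1 - t)
    have E2 := mul_le_mul_of_nonneg_left A2.le ht.le
    have B : t * (μ / 2 * (1 - t) * ‖xh - xs‖ ^ 2) ≤ t * (φ xh - φ xs) := by
      nlinarith [E1, E2, A3]
    have B2 : μ / 2 * (1 - t) * ‖xh - xs‖ ^ 2 ≤ φ xh - φ xs :=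
      le_of_mul_le_mul_left B ht
    nlinarith [B2]
  have h0 := aux_eps (b := μ / 2 * ‖xh - xs‖ ^ 2) (by positivity) key
  linarith

lemma sq_tri {a b c : ℝ} (ha : 0 ≤ a) (h : a ≤ b + c) :
    a ^ 2 ≤ 2 * b ^ 2 + 2 * c ^ 2 := by nlinarith [sq_nonneg (b - c), sq_nonneg (b + c)]

lemma comp_step {E : Type*} [NormedAddCommGroup E] [InnerProductSpace ℝ E]
    {C : Set E} (hC : Convex ℝ C) {u uh up us : E}
    (huh : uh ∈ C) (hup : up ∈ C) (hus : us ∈ C) (η : ℝ) (G0 Gh : E)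
    (h1 : ∀ z ∈ C, ‖(u - η • G0) - uh‖ ≤ ‖(u - η • G0) - z‖)
    (h2 : ∀ z ∈ C, ‖(u - η • Gh) - up‖ ≤ ‖(u - η • Gh) - z‖) :
    ‖up - us‖ ^ 2 ≤ ‖u - us‖ ^ 2 - ‖u - uh‖ ^ 2 - ‖uh - up‖ ^ 2
      - 2 * η * ⟪Gh, uh - us⟫ + 2 * η * ⟪G0 - Gh, up - uh⟫ := by
  have VI1 := projVI hC huh hup h1
  have VI2 := projVI hC hup hus h2
  have e1 : ‖up - us‖ ^ 2 = ‖u - us‖ ^ 2 - 2 * ⟪u - us, u - up⟫ + ‖u - up‖ ^ 2 := by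
    have h : up - us = (u - us) - (u - up) := by abel
    rw [h, norm_sub_sq_real]
  have e2 : ‖uh - up‖ ^ 2 = ‖u - uh‖ ^ 2 - 2 * ⟪u - uh, u - up⟫ + ‖u - up‖ ^ 2 := by
    have h : uh - up = (u - up) - (u - uh) := by abel
    rw [h, norm_sub_sq_real, real_inner_comm]
    ring
  have e3 : ⟪Gh, uh - us⟫ = ⟪Gh, u - us⟫ - ⟪Gh, u - uh⟫ := by
    rw [← inner_sub_right]; congr 1; abel
  have e4 : ⟪G0 - Gh, up - uh⟫
      = (⟪G0, u - uh⟫ - ⟪G0, u - up⟫) - (⟪Gh, u - uh⟫ - ⟪Gh, u - up⟫) := by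
    simp only [inner_sub_left, inner_sub_right]; ring
  have e5 : ⟪(u - η • G0) - uh, up - uh⟫
      = ‖u - uh‖ ^ 2 - ⟪u - uh, u - up⟫ - η * ⟪G0, u - uh⟫ + η * ⟪G0, u - up⟫ := by
    simp only [← real_inner_self_eq_norm_sq, inner_sub_left, inner_sub_right,
      real_inner_smul_left]
    ring
  have e6 : ⟪(u - η • Gh) - up, us - up⟫
      = ‖u - up‖ ^ 2 - ⟪u - us, u - up⟫ - η * ⟪Gh, u - up⟫ + η * ⟪Gh, u - us⟫ := by
    rw [real_inner_comm (u - up) (u - us)]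
    simp only [← real_inner_self_eq_norm_sq, inner_sub_left, inner_sub_right,
      real_inner_smul_left]
    ring
  rw [e5] at VI1
  rw [e6] at VI2
  rw [e1, e2, e3, e4]
  linarith

set_option maxHeartbeats 2000000 in
/-- Theorem 3 of the paper (deterministic core): for an `L`-smooth,
`μ`-strongly convex-strongly concave `f` with saddle point `z* = (x*, y*)`, the
perturbed extra-gradient iteration with step size `η = 1/(4L)` and all gradient
errors bounded by `Δ` satisfies, writing `‖z* − z_t‖² = ‖x* − x_t‖² + ‖y* − y_t‖²`,
the contraction `‖z* − z_{t+1}‖² ≤ (1 − 1/(4κ))‖z* − z_t‖² + 2ΔD/L` with `κ = L/μ`,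
and consequently `‖z* − z_{T+1}‖² ≤ e^{−T/(4κ)}‖z* − z_1‖² + 8κΔD/L`. -/
theorem stmt17 {n m : ℕ} (X : Set (EuclideanSpace ℝ (Fin n)))
    (Y : Set (EuclideanSpace ℝ (Fin m)))
    (hX : Convex ℝ X) (hY : Convex ℝ Y) (hXc : IsCompact X) (hYc : IsCompact Y)
    (D : ℝ) (hDX : Metric.diam X ≤ D) (hDY : Metric.diam Y ≤ D)
    (f : EuclideanSpace ℝ (Fin n) → EuclideanSpace ℝ (Fin m) → ℝ)
    (gx : EuclideanSpace ℝ (Fin n) → EuclideanSpace ℝ (Fin m) → EuclideanSpace ℝ (Fin n))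
    (gy : EuclideanSpace ℝ (Fin n) → EuclideanSpace ℝ (Fin m) → EuclideanSpace ℝ (Fin m))
    (hgx : ∀ x y, HasGradientAt (fun x' => f x' y) (gx x y) x)
    (hgy : ∀ x y, HasGradientAt (fun y' => f x y') (gy x y) y)
    (μ L : ℝ) (hμ : 0 < μ) (hμL : μ ≤ L)
    -- μ-strong convexity in x and μ-strong concavity in y (Assumption 2)
    (hsc : ∀ y ∈ Y, ∀ x₁ ∈ X, ∀ x₂ ∈ X,
      f x₂ y ≥ f x₁ y + ⟪gx x₁ y, x₂ - x₁⟫ + μ / 2 * ‖x₂ - x₁‖ ^ 2)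
    (hscc : ∀ x ∈ X, ∀ y₁ ∈ Y, ∀ y₂ ∈ Y,
      f x y₂ ≤ f x y₁ + ⟪gy x y₁, y₂ - y₁⟫ - μ / 2 * ‖y₂ - y₁‖ ^ 2)
    -- L-smoothness (Assumption 1)
    (hsmooth_x : ∀ x₁ ∈ X, ∀ y₁ ∈ Y, ∀ x₂ ∈ X, ∀ y₂ ∈ Y,
      ‖gx x₁ y₁ - gx x₂ y₂‖ ≤ L * (‖x₁ - x₂‖ + ‖y₁ - y₂‖))
    (hsmooth_y : ∀ x₁ ∈ X, ∀ y₁ ∈ Y, ∀ x₂ ∈ X, ∀ y₂ ∈ Y,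
      ‖gy x₁ y₁ - gy x₂ y₂‖ ≤ L * (‖x₁ - x₂‖ + ‖y₁ - y₂‖))
    -- saddle point z* = (x*, y*)
    (xs : EuclideanSpace ℝ (Fin n)) (ys : EuclideanSpace ℝ (Fin m))
    (hxs : xs ∈ X) (hys : ys ∈ Y)
    (hsaddle : ∀ x ∈ X, ∀ y ∈ Y, f xs y ≤ f xs ys ∧ f xs ys ≤ f x ys)
    -- step size η = 1/(4L)
    (η : ℝ) (hη : η = 1 / (4 * L))
    (ex : EuclideanSpace ℝ (Fin n) → EuclideanSpace ℝ (Fin m) → EuclideanSpace ℝ (Fin n))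
    (ey : EuclideanSpace ℝ (Fin n) → EuclideanSpace ℝ (Fin m) → EuclideanSpace ℝ (Fin m))
    (x xh : ℕ → EuclideanSpace ℝ (Fin n)) (y yh : ℕ → EuclideanSpace ℝ (Fin m))
    (hxmem : ∀ t, x t ∈ X) (hymem : ∀ t, y t ∈ Y)
    (hxhmem : ∀ t, xh t ∈ X) (hyhmem : ∀ t, yh t ∈ Y)
    -- ẑ_t = Π_Z(z_t − η G̃(z_t)) (componentwise projection)
    (hxh : ∀ t, ∀ z ∈ X,
      ‖(x t - η • (gx (x t) (y t) + ex (x t) (y t))) - xh t‖ ≤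
        ‖(x t - η • (gx (x t) (y t) + ex (x t) (y t))) - z‖)
    (hyh : ∀ t, ∀ z ∈ Y,
      ‖(y t + η • (gy (x t) (y t) + ey (x t) (y t))) - yh t‖ ≤
        ‖(y t + η • (gy (x t) (y t) + ey (x t) (y t))) - z‖)
    -- z_{t+1} = Π_Z(z_t − η G̃(ẑ_t))
    (hxn : ∀ t, ∀ z ∈ X,
      ‖(x t - η • (gx (xh t) (yh t) + ex (xh t) (yh t))) - x (t + 1)‖ ≤
        ‖(x t - η • (gx (xh t) (yh t) + ex (xh t) (yh t))) - z‖)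
    (hyn : ∀ t, ∀ z ∈ Y,
      ‖(y t + η • (gy (xh t) (yh t) + ey (xh t) (yh t))) - y (t + 1)‖ ≤
        ‖(y t + η • (gy (xh t) (yh t) + ey (xh t) (yh t))) - z‖)
    -- all gradient errors bounded by Δ at every query point
    (Δ : ℝ) (hΔ0 : 0 ≤ Δ)
    (herr : ∀ t, ‖ex (x t) (y t)‖ ≤ Δ ∧ ‖ex (xh t) (yh t)‖ ≤ Δ ∧
      ‖ey (x t) (y t)‖ ≤ Δ ∧ ‖ey (xh t) (yh t)‖ ≤ Δ) :
    (∀ t, ‖xs - x (t + 1)‖ ^ 2 + ‖ys - y (t + 1)‖ ^ 2 ≤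
        (1 - 1 / (4 * (L / μ))) * (‖xs - x t‖ ^ 2 + ‖ys - y t‖ ^ 2) +
          2 * Δ * D / L) ∧
    (∀ T : ℕ, ‖xs - x (T + 1)‖ ^ 2 + ‖ys - y (T + 1)‖ ^ 2 ≤
        Real.exp (-(T : ℝ) / (4 * (L / μ))) * (‖xs - x 1‖ ^ 2 + ‖ys - y 1‖ ^ 2) +
          8 * (L / μ) * Δ * D / L) := by
  have hL : 0 < L := lt_of_lt_of_le hμ hμL
  have hD0 : 0 ≤ D := le_trans Metric.diam_nonneg hDX
  have hη0 : 0 < η := by rw [hη]; positivity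
  have hκ : 1 / (4 * (L / μ)) = η * μ := by
    rw [hη]; field_simp
  have herr8 : 2 * Δ * D / L = 8 * η * Δ * D := by
    rw [hη]; field_simp; ring
  have hDb : ∀ a ∈ X, ∀ b ∈ X, ‖a - b‖ ≤ D := by
    intro a ha b hb
    rw [← dist_eq_norm]
    exact le_trans (Metric.dist_le_diam_of_mem hXc.isBounded ha hb) hDX
  have hDbY : ∀ a ∈ Y, ∀ b ∈ Y, ‖a - b‖ ≤ D := by
    intro a ha b hb
    rw [← dist_eq_norm]
    exact le_trans (Metric.dist_le_diam_of_mem hYc.isBounded ha hb) hDY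
  have h2ηL : 2 * η * L = 1 / 2 := by
    rw [hη]; field_simp; ring
  have hημ : η * μ ≤ 1 / 4 := by
    have h' : η * μ = μ / (4 * L) := by rw [hη]; ring
    rw [h', div_le_div_iff₀ (by positivity) (by norm_num : (0:ℝ) < 4)]
    linarith
  have step : ∀ t, ‖xs - x (t + 1)‖ ^ 2 + ‖ys - y (t + 1)‖ ^ 2 ≤
      (1 - 1 / (4 * (L / μ))) * (‖xs - x t‖ ^ 2 + ‖ys - y t‖ ^ 2) +
        2 * Δ * D / L := by
    intro t
    obtain ⟨he1, he2, he3, he4⟩ := herr t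
    rw [norm_sub_rev xs (x (t+1)), norm_sub_rev ys (y (t+1)),
      norm_sub_rev xs (x t), norm_sub_rev ys (y t), hκ, herr8]
    -- x component of the extragradient step
    have hXstep := comp_step hX (hxhmem t) (hxmem (t+1)) hxs η
      (gx (x t) (y t) + ex (x t) (y t)) (gx (xh t) (yh t) + ex (xh t) (yh t))
      (hxh t) (hxn t)
    -- y component of the extragradient step (ascent = descent with step -η)
    have hyh' : ∀ z ∈ Y, ‖(y t - (-η) • (gy (x t) (y t) + ey (x t) (y t))) - yh t‖ ≤
        ‖(y t - (-η) • (gy (x t) (y t) + ey (x t) (y t))) - z‖ := by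
      intro z hz
      have hrw : y t - (-η) • (gy (x t) (y t) + ey (x t) (y t))
          = y t + η • (gy (x t) (y t) + ey (x t) (y t)) := by module
      rw [hrw]; exact hyh t z hz
    have hyn' : ∀ z ∈ Y, ‖(y t - (-η) • (gy (xh t) (yh t) + ey (xh t) (yh t))) - y (t+1)‖ ≤
        ‖(y t - (-η) • (gy (xh t) (yh t) + ey (xh t) (yh t))) - z‖ := by
      intro z hz
      have hrw : y t - (-η) • (gy (xh t) (yh t) + ey (xh t) (yh t))
          = y t + η • (gy (xh t) (yh t) + ey (xh t) (yh t)) := by module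
      rw [hrw]; exact hyn t z hz
    have hYstep := comp_step hY (hyhmem t) (hymem (t+1)) hys (-η)
      (gy (x t) (y t) + ey (x t) (y t)) (gy (xh t) (yh t) + ey (xh t) (yh t))
      hyh' hyn'
    -- split the inner products in hXstep
    have sx1 : ⟪gx (xh t) (yh t) + ex (xh t) (yh t), xh t - xs⟫
        = ⟪gx (xh t) (yh t), xh t - xs⟫ + ⟪ex (xh t) (yh t), xh t - xs⟫ :=
      inner_add_left _ _ _
    have sx2 : ⟪(gx (x t) (y t) + ex (x t) (y t)) - (gx (xh t) (yh t) + ex (xh t) (yh t)),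
          x (t+1) - xh t⟫
        = ⟪gx (x t) (y t) - gx (xh t) (yh t), x (t+1) - xh t⟫
          + ⟪ex (x t) (y t), x (t+1) - xh t⟫ - ⟪ex (xh t) (yh t), x (t+1) - xh t⟫ := by
      simp only [inner_sub_left, inner_add_left]; ring
    have cx : ⟪ex (xh t) (yh t), xh t - xs⟫ + ⟪ex (xh t) (yh t), x (t+1) - xh t⟫
        = ⟪ex (xh t) (yh t), x (t+1) - xs⟫ := by
      rw [← inner_add_right]; congr 1; abel
    have sy1 : ⟪gy (xh t) (yh t) + ey (xh t) (yh t), yh t - ys⟫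
        = ⟪gy (xh t) (yh t), yh t - ys⟫ + ⟪ey (xh t) (yh t), yh t - ys⟫ :=
      inner_add_left _ _ _
    have sy2 : ⟪(gy (x t) (y t) + ey (x t) (y t)) - (gy (xh t) (yh t) + ey (xh t) (yh t)),
          y (t+1) - yh t⟫
        = ⟪gy (x t) (y t) - gy (xh t) (yh t), y (t+1) - yh t⟫
          + ⟪ey (x t) (y t), y (t+1) - yh t⟫ - ⟪ey (xh t) (yh t), y (t+1) - yh t⟫ := by
      simp only [inner_sub_left, inner_add_left]; ring
    have cy : ⟪ey (xh t) (yh t), yh t - ys⟫ + ⟪ey (xh t) (yh t), y (t+1) - yh t⟫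
        = ⟪ey (xh t) (yh t), y (t+1) - ys⟫ := by
      rw [← inner_add_right]; congr 1; abel
    -- bounds on error inner products
    have bx1 : |⟪ex (xh t) (yh t), x (t+1) - xs⟫| ≤ Δ * D :=
      le_trans (abs_real_inner_le_norm _ _)
        (mul_le_mul he2 (hDb _ (hxmem (t+1)) _ hxs) (norm_nonneg _) hΔ0)
    have bx2 : |⟪ex (x t) (y t), x (t+1) - xh t⟫| ≤ Δ * D :=
      le_trans (abs_real_inner_le_norm _ _)
        (mul_le_mul he1 (hDb _ (hxmem (t+1)) _ (hxhmem t)) (norm_nonneg _) hΔ0)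
    have by1 : |⟪ey (xh t) (yh t), y (t+1) - ys⟫| ≤ Δ * D :=
      le_trans (abs_real_inner_le_norm _ _)
        (mul_le_mul he4 (hDbY _ (hymem (t+1)) _ hys) (norm_nonneg _) hΔ0)
    have by2 : |⟪ey (x t) (y t), y (t+1) - yh t⟫| ≤ Δ * D :=
      le_trans (abs_real_inner_le_norm _ _)
        (mul_le_mul he3 (hDbY _ (hymem (t+1)) _ (hyhmem t)) (norm_nonneg _) hΔ0)
    -- bounds on the smoothness cross terms
    have hCx : |⟪gx (x t) (y t) - gx (xh t) (yh t), x (t+1) - xh t⟫|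
        ≤ L * (‖x t - xh t‖ + ‖y t - yh t‖) * ‖xh t - x (t+1)‖ := by
      have h1 := abs_real_inner_le_norm (gx (x t) (y t) - gx (xh t) (yh t)) (x (t+1) - xh t)
      have h2 := hsmooth_x (x t) (hxmem t) (y t) (hymem t) (xh t) (hxhmem t) (yh t) (hyhmem t)
      rw [norm_sub_rev (x (t+1)) (xh t)] at h1
      calc |⟪gx (x t) (y t) - gx (xh t) (yh t), x (t+1) - xh t⟫|
          ≤ ‖gx (x t) (y t) - gx (xh t) (yh t)‖ * ‖xh t - x (t+1)‖ := h1
        _ ≤ L * (‖x t - xh t‖ + ‖y t - yh t‖) * ‖xh t - x (t+1)‖ :=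
            mul_le_mul_of_nonneg_right h2 (norm_nonneg _)
    have hCy : |⟪gy (x t) (y t) - gy (xh t) (yh t), y (t+1) - yh t⟫|
        ≤ L * (‖x t - xh t‖ + ‖y t - yh t‖) * ‖yh t - y (t+1)‖ := by
      have h1 := abs_real_inner_le_norm (gy (x t) (y t) - gy (xh t) (yh t)) (y (t+1) - yh t)
      have h2 := hsmooth_y (x t) (hxmem t) (y t) (hymem t) (xh t) (hxhmem t) (yh t) (hyhmem t)
      rw [norm_sub_rev (y (t+1)) (yh t)] at h1
      calc |⟪gy (x t) (y t) - gy (xh t) (yh t), y (t+1) - yh t⟫|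
          ≤ ‖gy (x t) (y t) - gy (xh t) (yh t)‖ * ‖yh t - y (t+1)‖ := h1
        _ ≤ L * (‖x t - xh t‖ + ‖y t - yh t‖) * ‖yh t - y (t+1)‖ :=
            mul_le_mul_of_nonneg_right h2 (norm_nonneg _)
    -- strong monotonicity at the saddle point
    have hmono1 : f xs ys + μ / 2 * ‖xh t - xs‖ ^ 2 ≤ f (xh t) ys :=
      scmin (φ := fun x' => f x' ys) (g := fun x' => gx x' ys) hX hμ.le
        (fun x₁ h₁ x₂ h₂ => hsc ys hys x₁ h₁ x₂ h₂) hxs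
        (fun x' hx' => (hsaddle x' hx' ys hys).2) (hxhmem t)
    have hmono2 : -(f xs ys) + μ / 2 * ‖yh t - ys‖ ^ 2 ≤ -(f xs (yh t)) :=
      scmin (φ := fun y' => -(f xs y')) (g := fun y' => -(gy xs y')) hY hμ.le
        (by
          intro y₁ h₁ y₂ h₂
          have h := hscc xs hxs y₁ h₁ y₂ h₂
          have hn : ⟪-(gy xs y₁), y₂ - y₁⟫ = -⟪gy xs y₁, y₂ - y₁⟫ := inner_neg_left _ _
          simp only [ge_iff_le, hn]
          linarith) hys
        (fun y' hy' => by have := (hsaddle xs hxs y' hy').1; simp only [neg_le_neg_iff]; linarith)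
        (hyhmem t)
    have hi := hsc (yh t) (hyhmem t) (xh t) (hxhmem t) xs hxs
    have hii := hscc (xh t) (hxhmem t) (yh t) (hyhmem t) ys hys
    have ci : ⟪gx (xh t) (yh t), xs - xh t⟫ = -⟪gx (xh t) (yh t), xh t - xs⟫ := by
      rw [show xs - xh t = -(xh t - xs) by abel, inner_neg_right]
    have cii : ⟪gy (xh t) (yh t), ys - yh t⟫ = -⟪gy (xh t) (yh t), yh t - ys⟫ := by
      rw [show ys - yh t = -(yh t - ys) by abel, inner_neg_right]
    rw [norm_sub_rev xs (xh t), ci] at hi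
    rw [norm_sub_rev ys (yh t), cii] at hii
    have hM : μ * (‖xh t - xs‖ ^ 2 + ‖yh t - ys‖ ^ 2)
        ≤ ⟪gx (xh t) (yh t), xh t - xs⟫ - ⟪gy (xh t) (yh t), yh t - ys⟫ := by
      linarith only [hi, hii, hmono1, hmono2]
    -- triangle inequalities
    have htri1 : ‖x t - xs‖ ^ 2 ≤ 2 * ‖xh t - xs‖ ^ 2 + 2 * ‖x t - xh t‖ ^ 2 := by
      have h := norm_add_le (x t - xh t) (xh t - xs)
      rw [show (x t - xh t) + (xh t - xs) = x t - xs by abel] at h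
      have h2 := sq_tri (norm_nonneg (x t - xs)) h
      linarith only [h2]
    have htri2 : ‖y t - ys‖ ^ 2 ≤ 2 * ‖yh t - ys‖ ^ 2 + 2 * ‖y t - yh t‖ ^ 2 := by
      have h := norm_add_le (y t - yh t) (yh t - ys)
      rw [show (y t - yh t) + (yh t - ys) = y t - ys by abel] at h
      have h2 := sq_tri (norm_nonneg (y t - ys)) h
      linarith only [h2]
    rw [sx1, sx2] at hXstep
    rw [sy1, sy2] at hYstep
    -- abbreviate the scalar quantities
    set a1 := ‖x t - xh t‖ with ha1
    set a2 := ‖y t - yh t‖ with ha2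
    set b1 := ‖xh t - x (t+1)‖ with hb1
    set b2 := ‖yh t - y (t+1)‖ with hb2
    set p1 := ‖xh t - xs‖ with hp1
    set p2 := ‖yh t - ys‖ with hp2
    -- intermediate component inequalities
    have Px : ‖x (t+1) - xs‖ ^ 2 ≤ ‖x t - xs‖ ^ 2 - a1 ^ 2 - b1 ^ 2
        - 2 * η * ⟪gx (xh t) (yh t), xh t - xs⟫
        + 2 * η * (L * (a1 + a2) * b1) + 4 * η * (Δ * D) := by
      have m1 := mul_le_mul_of_nonneg_left (neg_abs_le ⟪ex (xh t) (yh t), x (t+1) - xs⟫)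
        (by positivity : (0:ℝ) ≤ 2 * η)
      have m2 := mul_le_mul_of_nonneg_left (le_abs_self ⟪ex (x t) (y t), x (t+1) - xh t⟫)
        (by positivity : (0:ℝ) ≤ 2 * η)
      have m3 := mul_le_mul_of_nonneg_left (le_abs_self
        ⟪gx (x t) (y t) - gx (xh t) (yh t), x (t+1) - xh t⟫)
        (by positivity : (0:ℝ) ≤ 2 * η)
      have m1' := mul_le_mul_of_nonneg_left bx1 (by positivity : (0:ℝ) ≤ 2 * η)
      have m2' := mul_le_mul_of_nonneg_left bx2 (by positivity : (0:ℝ) ≤ 2 * η)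
      have m3' := mul_le_mul_of_nonneg_left hCx (by positivity : (0:ℝ) ≤ 2 * η)
      have cx' : 2 * η * ⟪ex (xh t) (yh t), xh t - xs⟫
          + 2 * η * ⟪ex (xh t) (yh t), x (t+1) - xh t⟫
          = 2 * η * ⟪ex (xh t) (yh t), x (t+1) - xs⟫ := by rw [← mul_add, cx]
      linarith only [hXstep, cx', m1, m2, m3, m1', m2', m3']
    have Py : ‖y (t+1) - ys‖ ^ 2 ≤ ‖y t - ys‖ ^ 2 - a2 ^ 2 - b2 ^ 2
        + 2 * η * ⟪gy (xh t) (yh t), yh t - ys⟫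
        + 2 * η * (L * (a1 + a2) * b2) + 4 * η * (Δ * D) := by
      have m1 := mul_le_mul_of_nonneg_left (le_abs_self ⟪ey (xh t) (yh t), y (t+1) - ys⟫)
        (by positivity : (0:ℝ) ≤ 2 * η)
      have m2 := mul_le_mul_of_nonneg_left (neg_abs_le ⟪ey (x t) (y t), y (t+1) - yh t⟫)
        (by positivity : (0:ℝ) ≤ 2 * η)
      have m3 := mul_le_mul_of_nonneg_left (neg_abs_le
        ⟪gy (x t) (y t) - gy (xh t) (yh t), y (t+1) - yh t⟫)
        (by positivity : (0:ℝ) ≤ 2 * η)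
      have m1' := mul_le_mul_of_nonneg_left by1 (by positivity : (0:ℝ) ≤ 2 * η)
      have m2' := mul_le_mul_of_nonneg_left by2 (by positivity : (0:ℝ) ≤ 2 * η)
      have m3' := mul_le_mul_of_nonneg_left hCy (by positivity : (0:ℝ) ≤ 2 * η)
      have cy' : 2 * η * ⟪ey (xh t) (yh t), yh t - ys⟫
          + 2 * η * ⟪ey (xh t) (yh t), y (t+1) - yh t⟫
          = 2 * η * ⟪ey (xh t) (yh t), y (t+1) - ys⟫ := by rw [← mul_add, cy]
      linarith only [hYstep, cy', m1, m2, m3, m1', m2', m3']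
    -- combine
    have hM2 := mul_le_mul_of_nonneg_left hM (by positivity : (0:ℝ) ≤ 2 * η)
    have hTr := mul_le_mul_of_nonneg_left (add_le_add htri1 htri2)
      (by positivity : (0:ℝ) ≤ η * μ)
    have hQ : 2 * (η * μ) * (a1 ^ 2 + a2 ^ 2) ≤ (1/2) * (a1 ^ 2 + a2 ^ 2) := by
      nlinarith only [sq_nonneg a1, sq_nonneg a2, hημ, hη0, hμ]
    have hCross : 2 * η * (L * (a1 + a2) * b1) + 2 * η * (L * (a1 + a2) * b2)
        ≤ (1/2) * (a1 ^ 2 + a2 ^ 2) + (1/2) * (b1 ^ 2 + b2 ^ 2) := by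
      have e : 2 * η * (L * (a1 + a2) * b1) + 2 * η * (L * (a1 + a2) * b2)
          = (2 * η * L) * ((a1 + a2) * (b1 + b2)) := by ring
      rw [e, h2ηL]
      nlinarith only [sq_nonneg (a1 + a2 - b1 - b2), sq_nonneg (a1 - a2), sq_nonneg (b1 - b2)]
    linarith only [Px, Py, hM2, hTr, hQ, hCross, sq_nonneg b1, sq_nonneg b2]
  refine ⟨step, ?_⟩
  intro T
  set c : ℝ := 1 - 1 / (4 * (L / μ)) with hc
  have hc0 : 0 ≤ c := by
    rw [hc, hκ]
    linarith only [hκ, hημ, mul_pos hη0 hμ]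
  have hc1 : c ≤ 1 := by
    rw [hc, hκ]
    nlinarith only [mul_pos hη0 hμ]
  set B : ℝ := 8 * (L / μ) * Δ * D / L with hB
  have hB0 : 0 ≤ B := by
    rw [hB]
    have : 0 ≤ L / μ := le_of_lt (div_pos hL hμ)
    positivity
  have hcB : c * B + 2 * Δ * D / L = B := by
    rw [hc, hB]
    field_simp
    ring
  have key : ∀ T : ℕ, ‖xs - x (T + 1)‖ ^ 2 + ‖ys - y (T + 1)‖ ^ 2
      ≤ c ^ T * (‖xs - x 1‖ ^ 2 + ‖ys - y 1‖ ^ 2) + B := by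
    intro T
    induction T with
    | zero => simp [hB0]
    | succ T ih =>
        have h1 := step (T + 1)
        have h2 := mul_le_mul_of_nonneg_left ih hc0
        calc ‖xs - x (T + 1 + 1)‖ ^ 2 + ‖ys - y (T + 1 + 1)‖ ^ 2
            ≤ c * (‖xs - x (T + 1)‖ ^ 2 + ‖ys - y (T + 1)‖ ^ 2) + 2 * Δ * D / L := h1
          _ ≤ c * (c ^ T * (‖xs - x 1‖ ^ 2 + ‖ys - y 1‖ ^ 2) + B) + 2 * Δ * D / L :=
              add_le_add_left h2 _
          _ = c ^ (T + 1) * (‖xs - x 1‖ ^ 2 + ‖ys - y 1‖ ^ 2) + (c * B + 2 * Δ * D / L) := by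
              rw [pow_succ]; ring
          _ = c ^ (T + 1) * (‖xs - x 1‖ ^ 2 + ‖ys - y 1‖ ^ 2) + B := by rw [hcB]
  have hce : c ≤ Real.exp (-(1 / (4 * (L / μ)))) := by
    have := Real.add_one_le_exp (-(1 / (4 * (L / μ))))
    rw [hc]; linarith
  have hpow : c ^ T ≤ Real.exp (-(T : ℝ) / (4 * (L / μ))) := by
    calc c ^ T ≤ (Real.exp (-(1 / (4 * (L / μ))))) ^ T := pow_le_pow_left₀ hc0 hce T
      _ = Real.exp ((T : ℝ) * (-(1 / (4 * (L / μ))))) := by rw [← Real.exp_nat_mul]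
      _ = Real.exp (-(T : ℝ) / (4 * (L / μ))) := by congr 1; ring
  have hS1 : 0 ≤ ‖xs - x 1‖ ^ 2 + ‖ys - y 1‖ ^ 2 := by positivity
  have := mul_le_mul_of_nonneg_right hpow hS1
  linarith only [key T, this]
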